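/- arXiv:2601.00979 — 2 statements merged into one kernel-verified Lean document; each statement's English description precedes it below -/
import Mathlib

section
/- The set of points of [0, 1/2] at which Ψ is discontinuous is countable; in particular, Ψ is bounded on [0, 1/2] and is integrable on the interval [0, 1/2] (with respect to Lebesgue measure, and Riemann integrable). -/
open Set MeasureTheory Filter

/-- `T(x) = x·(1 + {1/x})` for `x ≠ 0`, `T(0) = 0`. -/
noncomputable def Tmap (x : ℝ) : ℝ := if x = 0 then 0 else x * (1 + Int.fract (1 / x))

/-- `I(x) = {1/x} / (1 + {1/x})` for `x ≠ 0`, `I(0) = 0`. -/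
noncomputable def Imap (x : ℝ) : ℝ :=
  if x = 0 then 0 else Int.fract (1 / x) / (1 + Int.fract (1 / x))

/-- `Ψ(x) = 2x + 2·Σ_{j ≥ 1} T(x)·T(I(x))·⋯·T(I^{j-1}(x))·I^{j}(x)`. -/
noncomputable def Psi (x : ℝ) : ℝ :=
  2 * x + 2 * ∑' j : ℕ, (∏ i ∈ Finset.range (j + 1), Tmap (Imap^[i] x)) * Imap^[j + 1] x

lemma Imap_nonneg (x : ℝ) : 0 ≤ Imap x := by
  unfold Imap
  split
  · exact le_refl 0
  · have h0 := Int.fract_nonneg (1 / x)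
    exact div_nonneg h0 (by linarith)

lemma Imap_lt_half (x : ℝ) : Imap x < 1 / 2 := by
  unfold Imap
  split
  · norm_num
  · have h0 := Int.fract_nonneg (1 / x)
    have h1 := Int.fract_lt_one (1 / x)
    rw [div_lt_iff₀ (by linarith)]
    linarith

lemma Tmap_nonneg (x : ℝ) (hx : 0 ≤ x) : 0 ≤ Tmap x := by
  unfold Tmap
  split
  · exact le_refl 0
  · have h0 := Int.fract_nonneg (1 / x)
    exact mul_nonneg hx (by linarith)

lemma Tmap_le (x : ℝ) (hx : 0 ≤ x) (hx2 : x ≤ 1 / 2) : Tmap x ≤ 2 / 3 := by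
  unfold Tmap
  split
  · norm_num
  · rename_i hx0
    have hxpos : 0 < x := lt_of_le_of_ne hx (Ne.symm hx0)
    have h2 : (2 : ℝ) ≤ 1 / x := by
      rw [le_div_iff₀ hxpos]; linarith
    have hn : (2 : ℤ) ≤ ⌊(1 / x : ℝ)⌋ := by
      exact_mod_cast Int.le_floor.mpr (by exact_mod_cast h2)
    have hn' : (2 : ℝ) ≤ (⌊(1 / x : ℝ)⌋ : ℝ) := by exact_mod_cast hn
    have hkey : (⌊(1 / x : ℝ)⌋ : ℝ) + Int.fract (1 / x) = 1 / x := Int.floor_add_fract _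
    have hmul : x * ((⌊(1 / x : ℝ)⌋ : ℝ) + Int.fract (1 / x)) = 1 := by
      rw [hkey]; field_simp
    have h0 := Int.fract_nonneg (1 / x)
    have h1 := Int.fract_lt_one (1 / x)
    nlinarith [mul_pos hxpos (show (0:ℝ) < (⌊(1 / x : ℝ)⌋ : ℝ) + Int.fract (1 / x) by linarith)]

lemma iter_mem (x : ℝ) (hx : x ∈ Icc (0 : ℝ) (1 / 2)) (j : ℕ) :
    Imap^[j] x ∈ Icc (0 : ℝ) (1 / 2) := by
  induction j with
  | zero => exact hx
  | succ k ih =>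
    rw [Function.iterate_succ_apply']
    exact ⟨Imap_nonneg _, le_of_lt (Imap_lt_half _)⟩

lemma iter_succ_nonneg (x : ℝ) (j : ℕ) : 0 ≤ Imap^[j + 1] x := by
  rw [Function.iterate_succ_apply']; exact Imap_nonneg _

lemma iter_succ_lt (x : ℝ) (j : ℕ) : Imap^[j + 1] x < 1 / 2 := by
  rw [Function.iterate_succ_apply']; exact Imap_lt_half _

lemma term_nonneg (j : ℕ) (x : ℝ) (hx : x ∈ Icc (0 : ℝ) (1 / 2)) :
    0 ≤ (∏ i ∈ Finset.range (j + 1), Tmap (Imap^[i] x)) * Imap^[j + 1] x :=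
  mul_nonneg (Finset.prod_nonneg fun i _ => Tmap_nonneg _ (iter_mem x hx i).1)
    (iter_succ_nonneg x j)

lemma term_le (j : ℕ) (x : ℝ) (hx : x ∈ Icc (0 : ℝ) (1 / 2)) :
    (∏ i ∈ Finset.range (j + 1), Tmap (Imap^[i] x)) * Imap^[j + 1] x
      ≤ (2 / 3 : ℝ) ^ (j + 1) * (1 / 2) := by
  have hprod : (∏ i ∈ Finset.range (j + 1), Tmap (Imap^[i] x)) ≤ (2 / 3 : ℝ) ^ (j + 1) := by
    calc (∏ i ∈ Finset.range (j + 1), Tmap (Imap^[i] x))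
        ≤ ∏ i ∈ Finset.range (j + 1), (2 / 3 : ℝ) := by
          apply Finset.prod_le_prod
          · exact fun i _ => Tmap_nonneg _ (iter_mem x hx i).1
          · exact fun i _ => Tmap_le _ (iter_mem x hx i).1 (iter_mem x hx i).2
      _ = (2 / 3 : ℝ) ^ (j + 1) := by rw [Finset.prod_const, Finset.card_range]
  have h1 : 0 ≤ (∏ i ∈ Finset.range (j + 1), Tmap (Imap^[i] x)) :=
    Finset.prod_nonneg fun i _ => Tmap_nonneg _ (iter_mem x hx i).1
  exact mul_le_mul hprod (le_of_lt (iter_succ_lt x j)) (iter_succ_nonneg x j) (by positivity)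

lemma term_norm_le (j : ℕ) (x : ℝ) (hx : x ∈ Icc (0 : ℝ) (1 / 2)) :
    ‖(∏ i ∈ Finset.range (j + 1), Tmap (Imap^[i] x)) * Imap^[j + 1] x‖
      ≤ (2 / 3 : ℝ) ^ (j + 1) * (1 / 2) := by
  rw [Real.norm_eq_abs, abs_of_nonneg (term_nonneg j x hx)]
  exact term_le j x hx

lemma u_summable : Summable (fun j : ℕ => (2 / 3 : ℝ) ^ (j + 1) * (1 / 2)) := by
  have h : Summable (fun j : ℕ => (2 / 3 : ℝ) ^ j) :=
    summable_geometric_of_lt_one (by norm_num) (by norm_num)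
  have heq : (fun j : ℕ => (2 / 3 : ℝ) ^ (j + 1) * (1 / 2))
      = fun j : ℕ => ((2 / 3 : ℝ) ^ j * (2 / 3)) * (1 / 2) := by
    funext j; ring
  rw [heq]
  exact (h.mul_right _).mul_right _

lemma u_tsum : ∑' j : ℕ, ((2 / 3 : ℝ) ^ (j + 1) * (1 / 2)) = 1 := by
  have h1 : ∀ j : ℕ, (2 / 3 : ℝ) ^ (j + 1) * (1 / 2) = (2 / 3 : ℝ) ^ j * (1 / 3) := by
    intro j; ring
  rw [tsum_congr h1, tsum_mul_right, tsum_geometric_of_lt_one (by norm_num) (by norm_num)]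
  norm_num

lemma psi_bound (x : ℝ) (hx : x ∈ Icc (0 : ℝ) (1 / 2)) : |Psi x| ≤ 3 := by
  have hsum : Summable (fun j : ℕ =>
      (∏ i ∈ Finset.range (j + 1), Tmap (Imap^[i] x)) * Imap^[j + 1] x) :=
    Summable.of_nonneg_of_le (fun j => term_nonneg j x hx) (fun j => term_le j x hx) u_summable
  have hle : (∑' j : ℕ, (∏ i ∈ Finset.range (j + 1), Tmap (Imap^[i] x)) * Imap^[j + 1] x) ≤ 1 := by
    rw [← u_tsum]
    exact Summable.tsum_le_tsum (fun j => term_le j x hx) hsum u_summable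
  have hge : (0 : ℝ) ≤ ∑' j : ℕ, (∏ i ∈ Finset.range (j + 1), Tmap (Imap^[i] x)) * Imap^[j + 1] x :=
    tsum_nonneg fun j => term_nonneg j x hx
  have h0 : (0:ℝ) ≤ Psi x := by
    unfold Psi; nlinarith [hx.1]
  rw [abs_of_nonneg h0]
  unfold Psi
  nlinarith [hx.2]

/-- the countable "bad" set -/
def Zbad : Set ℝ := Set.range (fun n : ℤ => ((n : ℝ))⁻¹)

lemma Zbad_countable : Zbad.Countable := Set.countable_range _

lemma zero_mem_Zbad : (0 : ℝ) ∈ Zbad := ⟨0, by norm_num⟩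

lemma Imap_fiber_countable (c : ℝ) : {x : ℝ | Imap x = c}.Countable := by
  apply Set.Countable.mono _
    ((Set.countable_range (fun n : ℤ => 1 / (c / (1 - c) + (n : ℝ)))).insert 0)
  intro x hx
  simp only [Set.mem_setOf_eq] at hx
  by_cases hx0 : x = 0
  · exact Set.mem_insert_iff.mpr (Or.inl hx0)
  refine Set.mem_insert_iff.mpr (Or.inr ?_)
  rw [Imap, if_neg hx0] at hx
  set f := Int.fract (1 / x) with hf
  have hf0 : 0 ≤ f := Int.fract_nonneg _
  have hf1 : f < 1 := Int.fract_lt_one _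
  have h1f : (1 : ℝ) + f ≠ 0 := by linarith
  have hx' : f = c * (1 + f) := by
    field_simp at hx
    linarith [hx]
  have hc1 : c ≠ 1 := by
    rintro rfl
    nlinarith
  have hfc : f = c / (1 - c) := by
    rw [eq_div_iff (sub_ne_zero_of_ne (Ne.symm hc1))]
    linear_combination hx'
  refine ⟨⌊(1 / x : ℝ)⌋, ?_⟩
  have hkey : c / (1 - c) + (⌊(1 / x : ℝ)⌋ : ℝ) = 1 / x := by
    rw [← hfc, hf, add_comm, Int.floor_add_fract]
  show 1 / (c / (1 - c) + (⌊(1 / x : ℝ)⌋ : ℝ)) = x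
  rw [hkey, one_div_one_div]

lemma Imap_preimage_countable {S : Set ℝ} (hS : S.Countable) : (Imap ⁻¹' S).Countable := by
  have hsub : Imap ⁻¹' S ⊆ ⋃ c ∈ S, {x : ℝ | Imap x = c} := by
    intro x hx
    exact Set.mem_biUnion hx rfl
  exact Set.Countable.mono hsub (hS.biUnion fun c _ => Imap_fiber_countable c)

lemma iter_preimage_countable (k : ℕ) : ((Imap^[k]) ⁻¹' Zbad).Countable := by
  induction k with
  | zero => simpa using Zbad_countable
  | succ n ih =>
    rw [Function.iterate_succ, Set.preimage_comp]
    exact Imap_preimage_countable ih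

/-- union of all bad sets -/
def Bbad : Set ℝ := ⋃ k : ℕ, (Imap^[k]) ⁻¹' Zbad

lemma Bbad_countable : Bbad.Countable := Set.countable_iUnion iter_preimage_countable

lemma notin_Zbad_props {y : ℝ} (hy : y ∉ Zbad) :
    y ≠ 0 ∧ (1 / y) ≠ ((⌊(1 / y : ℝ)⌋ : ℝ)) := by
  constructor
  · rintro rfl; exact hy zero_mem_Zbad
  · intro h
    apply hy
    refine ⟨⌊(1 / y : ℝ)⌋, ?_⟩
    have hy0 : y ≠ 0 := by rintro rfl; exact hy zero_mem_Zbad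
    show ((⌊(1 / y : ℝ)⌋ : ℝ))⁻¹ = y
    rw [← h]
    simp

lemma fract_one_div_contAt {y : ℝ} (hy : y ∉ Zbad) :
    ContinuousAt (fun z : ℝ => Int.fract (1 / z)) y := by
  obtain ⟨hy0, hfl⟩ := notin_Zbad_props hy
  exact (continuousAt_fract hfl).comp ((continuousAt_const.div continuousAt_id hy0))

lemma Imap_contAt {y : ℝ} (hy : y ∉ Zbad) : ContinuousAt Imap y := by
  obtain ⟨hy0, _⟩ := notin_Zbad_props hy
  have hfr := fract_one_div_contAt hy
  have h1f : (1 : ℝ) + Int.fract (1 / y) ≠ 0 := by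
    have := Int.fract_nonneg (1 / y); linarith
  have hc : ContinuousAt (fun z : ℝ => Int.fract (1 / z) / (1 + Int.fract (1 / z))) y :=
    hfr.div (continuousAt_const.add hfr) h1f
  apply hc.congr
  filter_upwards [isOpen_compl_singleton.mem_nhds (by simpa using hy0 :
    y ∈ ({0}ᶜ : Set ℝ))] with z hz
  simp only [Set.mem_compl_iff, Set.mem_singleton_iff] at hz
  rw [Imap, if_neg hz]

lemma Tmap_contAt {y : ℝ} (hy : y ∉ Zbad) : ContinuousAt Tmap y := by
  obtain ⟨hy0, _⟩ := notin_Zbad_props hy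
  have hfr := fract_one_div_contAt hy
  have hc : ContinuousAt (fun z : ℝ => z * (1 + Int.fract (1 / z))) y :=
    continuousAt_id.mul (continuousAt_const.add hfr)
  apply hc.congr
  filter_upwards [isOpen_compl_singleton.mem_nhds (by simpa using hy0 :
    y ∈ ({0}ᶜ : Set ℝ))] with z hz
  simp only [Set.mem_compl_iff, Set.mem_singleton_iff] at hz
  rw [Tmap, if_neg hz]

lemma iter_contAt {x : ℝ} (hx : x ∉ Bbad) (k : ℕ) : ContinuousAt (Imap^[k]) x := by
  have hiter : ∀ j : ℕ, Imap^[j] x ∉ Zbad := by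
    intro j hj
    exact hx (Set.mem_iUnion.mpr ⟨j, hj⟩)
  induction k with
  | zero => simpa using continuousAt_id
  | succ n ih =>
    rw [Function.iterate_succ']
    exact (Imap_contAt (hiter n)).comp ih

lemma term_contAt {x : ℝ} (hx : x ∉ Bbad) (j : ℕ) :
    ContinuousAt (fun y : ℝ =>
      (∏ i ∈ Finset.range (j + 1), Tmap (Imap^[i] y)) * Imap^[j + 1] y) x := by
  have hiter : ∀ i : ℕ, Imap^[i] x ∉ Zbad := fun i hi => hx (Set.mem_iUnion.mpr ⟨i, hi⟩)
  have hprod : ContinuousAt (fun y : ℝ => ∏ i ∈ Finset.range (j + 1), Tmap (Imap^[i] y)) x := by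
    apply tendsto_finset_prod
    intro i _
    exact (Tmap_contAt (hiter i)).comp (iter_contAt hx i)
  exact hprod.mul (iter_contAt hx (j + 1))

lemma psi_contWithinAt {x : ℝ} (hx : x ∈ Icc (0 : ℝ) (1 / 2)) (hB : x ∉ Bbad) :
    ContinuousWithinAt Psi (Icc (0 : ℝ) (1 / 2)) x := by
  have htu := tendstoUniformlyOn_tsum u_summable
    (fun j y hy => term_norm_le j y hy)
  have hS : ContinuousWithinAt
      (fun y : ℝ => ∑' j : ℕ,
        (∏ i ∈ Finset.range (j + 1), Tmap (Imap^[i] y)) * Imap^[j + 1] y)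
      (Icc (0 : ℝ) (1 / 2)) x := by
    apply continuousWithinAt_of_locally_uniform_approx_of_continuousWithinAt hx
    intro u hu
    have := (htu u hu).exists
    obtain ⟨t, ht⟩ := this
    refine ⟨Icc (0 : ℝ) (1 / 2), self_mem_nhdsWithin,
      (fun y => ∑ j ∈ t, (∏ i ∈ Finset.range (j + 1), Tmap (Imap^[i] y)) * Imap^[j + 1] y),
      ?_, fun y hy => ht y hy⟩
    have : ContinuousAt (fun y : ℝ =>
        ∑ j ∈ t, (∏ i ∈ Finset.range (j + 1), Tmap (Imap^[i] y)) * Imap^[j + 1] y) x := by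
      apply tendsto_finset_sum
      intro j _
      exact term_contAt hB j
    exact this.continuousWithinAt
  have : ContinuousWithinAt (fun y : ℝ => 2 * y + 2 * ∑' j : ℕ,
      (∏ i ∈ Finset.range (j + 1), Tmap (Imap^[i] y)) * Imap^[j + 1] y)
      (Icc (0 : ℝ) (1 / 2)) x :=
    ((continuousWithinAt_id.const_mul 2).add (hS.const_mul 2))
  exact this

theorem stmt_11 :
    {x ∈ Set.Icc (0 : ℝ) (1 / 2) |
        ¬ ContinuousWithinAt Psi (Set.Icc (0 : ℝ) (1 / 2)) x}.Countable ∧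
    (∃ M : ℝ, ∀ x ∈ Set.Icc (0 : ℝ) (1 / 2), |Psi x| ≤ M) ∧
    MeasureTheory.IntegrableOn Psi (Set.Icc (0 : ℝ) (1 / 2)) MeasureTheory.volume ∧
    IntervalIntegrable Psi MeasureTheory.volume 0 (1 / 2) := by
  have hdisc : {x ∈ Set.Icc (0 : ℝ) (1 / 2) |
      ¬ ContinuousWithinAt Psi (Set.Icc (0 : ℝ) (1 / 2)) x} ⊆ Bbad := by
    intro x hx
    by_contra hB
    exact hx.2 (psi_contWithinAt hx.1 hB)
  have hcountable := Bbad_countable.mono hdisc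
  have hBnull : volume Bbad = 0 := Bbad_countable.measure_zero _
  have hIcc : MeasurableSet (Icc (0 : ℝ) (1 / 2)) := measurableSet_Icc
  have hdiffmeas : MeasurableSet (Icc (0 : ℝ) (1 / 2) \ Bbad) :=
    hIcc.diff Bbad_countable.measurableSet
  have hconton : ContinuousOn Psi (Icc (0 : ℝ) (1 / 2) \ Bbad) := by
    intro x hx
    exact (psi_contWithinAt hx.1 hx.2).mono Set.diff_subset
  have haeeq : (Icc (0 : ℝ) (1 / 2) \ Bbad : Set ℝ) =ᵐ[volume] Icc (0 : ℝ) (1 / 2) := by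
    rw [diff_ae_eq_self]
    exact measure_mono_null Set.inter_subset_right hBnull
  have hrestr : volume.restrict (Icc (0 : ℝ) (1 / 2)) =
      volume.restrict (Icc (0 : ℝ) (1 / 2) \ Bbad) :=
    (Measure.restrict_congr_set haeeq).symm
  have hmeas : AEStronglyMeasurable Psi (volume.restrict (Icc (0 : ℝ) (1 / 2))) := by
    rw [hrestr]
    exact hconton.aestronglyMeasurable hdiffmeas
  have hint : MeasureTheory.IntegrableOn Psi (Set.Icc (0 : ℝ) (1 / 2)) volume := by
    apply MeasureTheory.Integrable.mono' (g := fun _ : ℝ => (3 : ℝ))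
    · exact (integrableOn_const_iff).mpr (Or.inr (by simp [Real.volume_Icc]))
    · exact hmeas
    · filter_upwards [ae_restrict_mem hIcc] with x hx
      rw [Real.norm_eq_abs]
      exact psi_bound x hx
  refine ⟨hcountable, ⟨3, fun x hx => psi_bound x hx⟩, hint, ?_⟩
  apply MeasureTheory.IntegrableOn.intervalIntegrable
  rwa [Set.uIcc_of_le (by norm_num : (0:ℝ) ≤ 1 / 2)]
end

section
/- Let f(x) = 1 + Ψ(x) for x ∈ [0, 1/2]. Then for every integer m ≥ 1 and every y ∈ (0, 1/2), the point (1−y)/(m+1−m·y) lies in the interval (1/(m+2), 1/(m+1)) ⊂ (0, 1/2], and the self-similarity relation f(y) = (m+2)·y − (m+2) + (m+1−m·y)·f( (1−y)/(m+1−m·y) ) holds. -/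
lemma Imap_mem {z : ℝ} (hz : z ∈ Set.Icc (0:ℝ) (1/2)) : Imap z ∈ Set.Icc (0:ℝ) (1/2) := by
  unfold Imap
  split_ifs with h
  · norm_num
  · have hf0 := Int.fract_nonneg (1/z)
    have hf1 := Int.fract_lt_one (1/z)
    constructor
    · exact div_nonneg hf0 (by linarith)
    · rw [div_le_iff₀ (by linarith)]; linarith

lemma Tmap_mem {z : ℝ} (hz : z ∈ Set.Icc (0:ℝ) (1/2)) : Tmap z ∈ Set.Icc (0:ℝ) (2/3) := by
  unfold Tmap
  split_ifs with h
  · norm_num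
  · obtain ⟨h0, h2⟩ := hz
    have h0' : 0 < z := lt_of_le_of_ne h0 (Ne.symm h)
    have hf0 := Int.fract_nonneg (1/z)
    have hf1 := Int.fract_lt_one (1/z)
    refine ⟨mul_nonneg h0 (by linarith), ?_⟩
    rcases le_or_gt z (1/3) with hz3 | hz3
    · nlinarith
    · have h2z : (2:ℝ) ≤ 1/z := by rw [le_div_iff₀ h0']; linarith
      have hfl : (2:ℝ) ≤ (⌊1/z⌋ : ℤ) := by
        exact_mod_cast Int.le_floor.mpr (by exact_mod_cast h2z)
      have hkey : z * Int.fract (1/z) = 1 - z * (⌊1/z⌋ : ℤ) := by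
        rw [Int.fract]
        field_simp
      nlinarith

lemma iter_mem_s13 {y : ℝ} (hy : y ∈ Set.Icc (0:ℝ) (1/2)) (n : ℕ) :
    Imap^[n] y ∈ Set.Icc (0:ℝ) (1/2) := by
  induction n with
  | zero => simpa using hy
  | succ n ih => rw [Function.iterate_succ_apply']; exact Imap_mem ih

lemma summable_aux {y : ℝ} (hy : y ∈ Set.Icc (0:ℝ) (1/2)) :
    Summable (fun j : ℕ => (∏ i ∈ Finset.range j, Tmap (Imap^[i] y)) * Imap^[j] y) := by
  apply Summable.of_nonneg_of_le (f := fun j : ℕ => (2/3:ℝ)^j)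
  · intro j
    exact mul_nonneg (Finset.prod_nonneg fun i _ => (Tmap_mem (iter_mem_s13 hy i)).1)
      (iter_mem_s13 hy j).1
  · intro j
    calc (∏ i ∈ Finset.range j, Tmap (Imap^[i] y)) * Imap^[j] y
        ≤ (2/3:ℝ)^j * 1 := by
          apply mul_le_mul
          · calc ∏ i ∈ Finset.range j, Tmap (Imap^[i] y)
                ≤ ∏ _i ∈ Finset.range j, (2/3:ℝ) :=
                  Finset.prod_le_prod (fun i _ => (Tmap_mem (iter_mem_s13 hy i)).1)
                    (fun i _ => (Tmap_mem (iter_mem_s13 hy i)).2)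
              _ = (2/3:ℝ)^j := by rw [Finset.prod_const, Finset.card_range]
          · linarith [(iter_mem_s13 hy j).2]
          · exact (iter_mem_s13 hy j).1
          · positivity
      _ = (2/3:ℝ)^j := mul_one _
  · exact summable_geometric_of_lt_one (by norm_num) (by norm_num)

lemma psi_rel {x y : ℝ} (hx : x ≠ 0) (hy : y ∈ Set.Icc (0:ℝ) (1/2)) (hIx : Imap x = y) :
    Psi x = 2*x + Tmap x * Psi y := by
  have hiter : ∀ j : ℕ, Imap^[j+1] x = Imap^[j] y := fun j => by
    rw [Function.iterate_succ_apply, hIx]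
  have hg : ∀ j : ℕ, (∏ i ∈ Finset.range (j+1), Tmap (Imap^[i] x)) * Imap^[j+1] x
      = Tmap x * ((∏ i ∈ Finset.range j, Tmap (Imap^[i] y)) * Imap^[j] y) := by
    intro j
    rw [Finset.prod_range_succ', hiter j]
    have hp : ∏ i ∈ Finset.range j, Tmap (Imap^[i+1] x)
        = ∏ i ∈ Finset.range j, Tmap (Imap^[i] y) :=
      Finset.prod_congr rfl fun i _ => by rw [hiter i]
    rw [hp]
    simp only [Function.iterate_zero, id_eq]
    ring
  have h1 : (∑' j : ℕ, (∏ i ∈ Finset.range (j+1), Tmap (Imap^[i] x)) * Imap^[j+1] x)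
      = Tmap x * ∑' j : ℕ, ((∏ i ∈ Finset.range j, Tmap (Imap^[i] y)) * Imap^[j] y) := by
    rw [← tsum_mul_left]
    exact tsum_congr hg
  have h2 : (∑' j : ℕ, ((∏ i ∈ Finset.range j, Tmap (Imap^[i] y)) * Imap^[j] y))
      = y + ∑' j : ℕ, ((∏ i ∈ Finset.range (j+1), Tmap (Imap^[i] y)) * Imap^[j+1] y) := by
    rw [Summable.tsum_eq_zero_add (summable_aux hy)]
    simp
  unfold Psi
  rw [h1, h2]
  ring

theorem stmt_13 :
    ∀ m : ℕ, 1 ≤ m → ∀ y ∈ Set.Ioo (0 : ℝ) (1 / 2),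
      (1 - y) / ((m : ℝ) + 1 - m * y) ∈ Set.Ioo (1 / ((m : ℝ) + 2)) (1 / ((m : ℝ) + 1)) ∧
      1 + Psi y =
        ((m : ℝ) + 2) * y - ((m : ℝ) + 2) +
          ((m : ℝ) + 1 - m * y) * (1 + Psi ((1 - y) / ((m : ℝ) + 1 - m * y))) := by
  intro m hm y hy
  obtain ⟨hy0, hy2⟩ := hy
  have hM : (1:ℝ) ≤ m := by exact_mod_cast hm
  have hd : 0 < (m:ℝ) + 1 - m * y := by nlinarith
  set x := (1 - y) / ((m:ℝ) + 1 - m * y) with hxdef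
  have hx0 : 0 < x := div_pos (by linarith) hd
  have h1 : 1/((m:ℝ)+2) < x := by
    rw [hxdef, div_lt_div_iff₀ (by linarith) hd]; nlinarith
  have h2 : x < 1/((m:ℝ)+1) := by
    rw [hxdef, div_lt_div_iff₀ hd (by linarith)]; nlinarith
  refine ⟨⟨h1, h2⟩, ?_⟩
  have hy1 : (1:ℝ) - y ≠ 0 := by linarith
  have hinv : 1/x = ((m:ℝ)+1) + y/(1-y) := by
    rw [hxdef, one_div_div]
    field_simp
    ring
  have hfr : Int.fract (1/x) = y/(1-y) := by
    rw [hinv, show ((m:ℝ)+1) = ((m+1 : ℤ) : ℝ) by push_cast; ring, Int.fract_intCast_add]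
    refine Int.fract_eq_self.mpr ⟨div_nonneg hy0.le (by linarith), ?_⟩
    rw [div_lt_one (by linarith)]; linarith
  have hIx : Imap x = y := by
    rw [Imap, if_neg hx0.ne', hfr]
    rw [show (1:ℝ) + y/(1-y) = 1/(1-y) by field_simp; ring]
    field_simp
  have hTx : Tmap x = 1/((m:ℝ)+1-m*y) := by
    rw [Tmap, if_neg hx0.ne', hfr, hxdef]
    rw [show (1:ℝ) + y/(1-y) = 1/(1-y) by field_simp; ring]
    field_simp
  have hy_mem : y ∈ Set.Icc (0:ℝ) (1/2) := ⟨hy0.le, by linarith⟩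
  have hrel := psi_rel hx0.ne' hy_mem hIx
  rw [hTx] at hrel
  have hdx : ((m:ℝ)+1-m*y) * x = 1 - y := by
    rw [hxdef]; field_simp
  have hPy : Psi y = ((m:ℝ)+1-m*y) * Psi x - 2*(1-y) := by
    have h' : ((m:ℝ)+1-m*y) * Psi x = ((m:ℝ)+1-m*y) * (2*x) + Psi y := by
      rw [hrel]; field_simp
    nlinarith [h', hdx]
  linear_combination hPy
end
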